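/- arXiv:1903.03802 — 2 statements merged into one kernel-verified Lean document; each statement's English description precedes it below -/
import Mathlib

section
/- If QIF1(o) = QIF2(o) for every o ∈ O with p(o) > 0, and every s ∈ S has p(s) > 0, then the channel is deterministic: each s ∈ S has at most one o ∈ O with p(s,o) > 0. -/
/-- If `QIF1(o) = QIF2(o)` for every output `o` with `p(o) > 0`, and every input
has positive prior probability, then the channel is deterministic: each `s` has at
most one `o` with `p(s,o) > 0`. -/
theorem deterministic_of_qif1_eq_qif2 {S O : Type*} [Fintype S] [Fintype O]
    (p : S → O → ℝ)
    (hnn : ∀ s o, 0 ≤ p s o)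
    (hsum : ∑ s, ∑ o, p s o = 1)
    (hpriorpos : ∀ s, 0 < ∑ o', p s o')
    (heq : ∀ o, 0 < ∑ s, p s o →
      -Real.logb 2 (∑ s ∈ Finset.univ.filter (fun s => 0 < p s o), ∑ o', p s o') =
        -Real.logb 2 (∑ s, p s o)) :
    ∀ s, ∀ o₁ o₂, 0 < p s o₁ → 0 < p s o₂ → o₁ = o₂ := by
  classical
  intro s o₁ o₂ h1 h2
  by_contra hne
  have hpo : 0 < ∑ s', p s' o₁ :=
    lt_of_lt_of_le h1 (Finset.single_le_sum (fun i _ => hnn i o₁) (Finset.mem_univ s))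
  set pre := Finset.univ.filter (fun s' => 0 < p s' o₁) with hpre
  have hsmem : s ∈ pre := Finset.mem_filter.mpr ⟨Finset.mem_univ s, h1⟩
  have hApos : 0 < ∑ s' ∈ pre, ∑ o', p s' o' :=
    Finset.sum_pos (fun i _ => hpriorpos i) ⟨s, hsmem⟩
  have hAB : (∑ s' ∈ pre, ∑ o', p s' o') = ∑ s', p s' o₁ := by
    have h := heq o₁ hpo
    have h' := neg_injective h
    exact Real.logb_injOn_pos (by norm_num : (1:ℝ) < 2)
      (Set.mem_Ioi.mpr hApos) (Set.mem_Ioi.mpr hpo) h'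
  have hB : (∑ s', p s' o₁) = ∑ s' ∈ pre, p s' o₁ := by
    symm
    apply Finset.sum_filter_of_ne
    intro x _ hx
    exact lt_of_le_of_ne (hnn x o₁) (Ne.symm hx)
  rw [hB] at hAB
  have hle : ∀ i ∈ pre, p i o₁ ≤ ∑ o', p i o' :=
    fun i _ => Finset.single_le_sum (fun o' _ => hnn i o') (Finset.mem_univ o₁)
  have hterm : ∀ i ∈ pre, p i o₁ = ∑ o', p i o' :=
    (Finset.sum_eq_sum_iff_of_le hle).mp hAB.symm
  have hs := (hterm s hsmem).symm
  have hpair : p s o₁ + p s o₂ ≤ ∑ o', p s o' := by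
    have : ({o₁, o₂} : Finset O) ⊆ Finset.univ := Finset.subset_univ _
    calc p s o₁ + p s o₂ = ∑ o' ∈ ({o₁, o₂} : Finset O), p s o' := by
          rw [Finset.sum_pair hne]
      _ ≤ ∑ o', p s o' :=
          Finset.sum_le_sum_of_subset_of_nonneg this (fun i _ _ => hnn s i)
  linarith
end

section
/- There exists a probabilistic channel for which the entropy-based dynamic leakage QIFdyn(o) = H(S) - H(S|o) is strictly negative for some output o. Concretely, with S = {s1, s2, s3}, priors p(s1) = 0.875, p(s2) = p(s3) = 0.0625, and the deterministic map f(s1) = a, f(s2) = f(s3) = b, one has H(S) - H(S|b) < 0. -/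
lemma logb7_gt : (17:ℝ)/7 < Real.logb 2 7 := by
  have h : Real.logb 2 (2^17 : ℝ) < Real.logb 2 (7^7 : ℝ) := by
    apply Real.logb_lt_logb (by norm_num) (by positivity)
    norm_num
  have h1 : Real.logb 2 ((2:ℝ)^(17:ℕ)) = 17 := by
    rw [Real.logb_pow, Real.logb_self_eq_one] <;> norm_num
  have h2 : Real.logb 2 ((7:ℝ)^(7:ℕ)) = 7 * Real.logb 2 7 := by
    rw [Real.logb_pow]; ring
  rw [h1, h2] at h
  linarith

/-- The entropy-based dynamic leakage `QIFdyn(o) = H(S) - H(S|o)` can be strictly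
negative: with priors `7/8, 1/16, 1/16` and the deterministic map sending the first
input to `a` and the other two to `b`, observing `b` gives posterior `(0, 1/2, 1/2)`
and `H(S) - H(S|b) < 0`. -/
theorem qifdyn_can_be_negative :
    (-(7/8 * Real.logb 2 (7/8) + 1/16 * Real.logb 2 (1/16) + 1/16 * Real.logb 2 (1/16)))
    - (-(1/2 * Real.logb 2 (1/2) + 1/2 * Real.logb 2 (1/2))) < 0 := by
  have e1 : Real.logb 2 (7/8 : ℝ) = Real.logb 2 7 - 3 := by
    rw [Real.logb_div (by norm_num) (by norm_num)]
    have : Real.logb 2 (8:ℝ) = 3 := by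
      rw [show (8:ℝ) = 2^(3:ℕ) by norm_num, Real.logb_pow, Real.logb_self_eq_one] <;> norm_num
    linarith
  have e2 : Real.logb 2 (1/16 : ℝ) = -4 := by
    rw [Real.logb_div one_ne_zero (by norm_num), Real.logb_one,
      show (16:ℝ) = 2^(4:ℕ) by norm_num, Real.logb_pow, Real.logb_self_eq_one] <;> norm_num
  have e3 : Real.logb 2 (1/2 : ℝ) = -1 := by
    rw [Real.logb_div one_ne_zero (by norm_num), Real.logb_one,
      Real.logb_self_eq_one] <;> norm_num
  have := logb7_gt
  rw [e1, e2, e3]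
  linarith
end
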